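/- Let n, m, d ≥ 1 be natural numbers and 0 < ε < 1 a real number. Let ψ be a formula consisting of m clauses, each with exactly 3 literals, over n variables, in which every variable occurs in at most d clauses. Then there exists a formula φ consisting of exactly 4m clauses, each with exactly 6 literals, over 2n variables, such that: (1) every variable of φ occurs in at most 4d clauses of φ; (2) if some assignment satisfies all m clauses of ψ, then some assignment NAE-satisfies all 4m clauses of φ; and (3) if every assignment satisfies at most (1−ε)m clauses of ψ, then every assignment NAE-satisfies at most (1−ε/4)·4m clauses of φ. -/

import Mathlib

/-- Value of a literal `(i, s)` under assignment `σ`. -/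
def litVal {V : Type*} (σ : V → Bool) (l : V × Bool) : Bool :=
  if l.2 then σ l.1 else !(σ l.1)

/-- A clause is satisfied if some literal evaluates to true. -/
def SatC {V : Type*} {j : ℕ} (σ : V → Bool) (C : Fin j → V × Bool) : Prop :=
  ∃ r, litVal σ (C r) = true

/-- A clause is NAE-satisfied if some literal is true and some literal is false. -/
def NAESatC {V : Type*} {j : ℕ} (σ : V → Bool) (C : Fin j → V × Bool) : Prop :=
  (∃ r, litVal σ (C r) = true) ∧ (∃ r, litVal σ (C r) = false)

instance {V : Type*} {j : ℕ} (σ : V → Bool) (C : Fin j → V × Bool) :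
    Decidable (SatC σ C) := by unfold SatC; infer_instance

instance {V : Type*} {j : ℕ} (σ : V → Bool) (C : Fin j → V × Bool) :
    Decidable (NAESatC σ C) := by unfold NAESatC; infer_instance

/-- Number of clauses of the formula `C` in which variable `i` occurs. -/
def occCount {V : Type*} [DecidableEq V] {ι : Type*} [Fintype ι] {j : ℕ}
    (C : ι → Fin j → V × Bool) (i : V) : ℕ :=
  (Finset.univ.filter (fun a => ∃ r, (C a r).1 = i)).card

/-- Number of clauses of the formula `C` satisfied by `σ`. -/
def satCount {V : Type*} {ι : Type*} [Fintype ι] {j : ℕ}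
    (σ : V → Bool) (C : ι → Fin j → V × Bool) : ℕ :=
  (Finset.univ.filter (fun a => SatC σ (C a))).card

/-- Number of clauses of the formula `C` NAE-satisfied by `σ`. -/
def naeCount {V : Type*} {ι : Type*} [Fintype ι] {j : ℕ}
    (σ : V → Bool) (C : ι → Fin j → V × Bool) : ℕ :=
  (Finset.univ.filter (fun a => NAESatC σ (C a))).card

namespace NAEaux

def xvar {n : ℕ} (i : Fin n) : Fin (2 * n) := ⟨i.1, by have := i.2; omega⟩

def yvar {n : ℕ} (i : Fin n) : Fin (2 * n) := ⟨n + i.1, by have := i.2; omega⟩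

def pat3 (c : Fin 4) : Fin 3 → Bool := ![false, decide (2 ≤ c.1), decide (c.1 % 2 = 1)]

def cenc (p2 p3 : Bool) : Fin 4 :=
  ⟨(cond p2 2 0) + (cond p3 1 0), by cases p2 <;> cases p3 <;> simp⟩

lemma pat3_cenc (p2 p3 : Bool) (k : Fin 3) : pat3 (cenc p2 p3) k = ![false, p2, p3] k := by
  cases p2 <;> cases p3 <;> fin_cases k <;> decide

/-- The gadget clause: one of 4 NAE-6 clauses built from a 3-clause `C`. -/
def gadget {n : ℕ} (C : Fin 3 → Fin n × Bool) (c : Fin 4) (r : Fin 6) : Fin (2 * n) × Bool :=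
  if h : r.1 < 3 then
    (xvar (C ⟨r.1, h⟩).1, !(xor (pat3 c ⟨r.1, h⟩) (!(C ⟨r.1, h⟩).2)))
  else
    (yvar (C ⟨r.1 - 3, by have := r.2; omega⟩).1, !(pat3 c ⟨r.1 - 3, by have := r.2; omega⟩))

lemma litVal_eq {V : Type*} (σ : V → Bool) (v : V) (s : Bool) :
    litVal σ (v, s) = xor (σ v) (!s) := by cases s <;> simp [litVal]

lemma bool1 : ∀ a s b : Bool, xor a (!(!(xor (xor (xor a (!s)) b) (!s)))) = b := by decide

lemma bool2 : ∀ a b : Bool, xor a (!(!(xor a b))) = b := by decide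

lemma bool3 : ∀ a b s : Bool, xor (xor a b) (!s) = false → b = xor a (!s) := by decide

/-- Soundness of the gadget. -/
lemma gadget_sound {n : ℕ} (C : Fin 3 → Fin n × Bool) (τ : Fin (2 * n) → Bool)
    (h : ¬ SatC (fun i => xor (τ (xvar i)) (τ (yvar i))) C) :
    ∃ c : Fin 4, ¬ NAESatC τ (gadget C c) := by
  set v : Fin 3 → Bool := fun k => xor (τ (xvar (C k).1)) (!(C k).2) with hv
  have hu : ∀ k, τ (yvar (C k).1) = v k := by
    intro k
    have hk : litVal (fun i => xor (τ (xvar i)) (τ (yvar i))) (C k) = false := by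
      by_contra hne
      exact h ⟨k, by simpa using hne⟩
    rw [show (C k) = ((C k).1, (C k).2) from rfl, litVal_eq] at hk
    exact bool3 _ _ _ hk
  set c : Fin 4 := cenc (xor (v 1) (v 0)) (xor (v 2) (v 0)) with hc
  have hp : ∀ k : Fin 3, pat3 c k = xor (v k) (v 0) := by
    intro k
    rw [hc, pat3_cenc]
    fin_cases k <;> simp
  refine ⟨c, ?_⟩
  have hall : ∀ r : Fin 6, litVal τ (gadget C c r) = v 0 := by
    intro r
    by_cases h3 : r.1 < 3
    · rw [gadget, dif_pos h3, litVal_eq, hp]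
      exact bool1 _ _ _
    · rw [gadget, dif_neg h3, litVal_eq, hp, hu]
      exact bool2 _ _
  rintro ⟨⟨r, hr⟩, ⟨r', hr'⟩⟩
  rw [hall r] at hr
  rw [hall r'] at hr'
  rw [hr] at hr'
  exact absurd hr' (by simp)

/-- Completeness of the gadget. -/
lemma gadget_complete {n : ℕ} (C : Fin 3 → Fin n × Bool) (σ : Fin n → Bool)
    (hsat : SatC σ C) (c : Fin 4) :
    NAESatC (fun z : Fin (2 * n) => if h : z.1 < n then σ ⟨z.1, h⟩ else false) (gadget C c) := by
  set τ : Fin (2 * n) → Bool :=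
    fun z => if h : z.1 < n then σ ⟨z.1, h⟩ else false with hτ
  have hx : ∀ i : Fin n, τ (xvar i) = σ i := by
    intro i
    rw [hτ]
    simp only [xvar]
    exact dif_pos i.2
  have hy : ∀ i : Fin n, τ (yvar i) = false := by
    intro i
    rw [hτ]
    simp only [yvar]
    exact dif_neg (show ¬ (n + i.1 < n) by omega)
  have hyval : ∀ (r : Fin 6) (h3 : ¬ r.1 < 3),
      litVal τ (gadget C c r) = pat3 c ⟨r.1 - 3, by have := r.2; omega⟩ := by
    intro r h3
    rw [gadget, dif_neg h3, litVal_eq, hy]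
    cases pat3 c ⟨r.1 - 3, by have := r.2; omega⟩ <;> simp
  constructor
  · -- a true literal
    by_cases h2 : pat3 c 1 = true
    · refine ⟨⟨4, by omega⟩, ?_⟩
      have := hyval ⟨4, by omega⟩ (by norm_num)
      rw [this, show (⟨(4:ℕ) - 3, by omega⟩ : Fin 3) = 1 from rfl]
      exact h2
    · by_cases h3 : pat3 c 2 = true
      · refine ⟨⟨5, by omega⟩, ?_⟩
        have := hyval ⟨5, by omega⟩ (by norm_num)
        rw [this, show (⟨(5:ℕ) - 3, by omega⟩ : Fin 3) = 2 from rfl]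
        exact h3
      · obtain ⟨k, hk⟩ := hsat
        refine ⟨⟨k.1, by have := k.2; omega⟩, ?_⟩
        have hk3 : (⟨k.1, by have := k.2; omega⟩ : Fin 3) = k := rfl
        have hpk : pat3 c k = false := by
          fin_cases k
          · rfl
          · simpa using h2
          · simpa using h3
        rw [gadget, dif_pos (by have := k.2; omega), litVal_eq]
        rw [show (⟨k.1, by have := k.2; omega⟩ : Fin 3) = k from rfl] at *
        rw [hpk, hx]
        rw [show (C k) = ((C k).1, (C k).2) from rfl, litVal_eq] at hk
        revert hk
        cases σ (C k).1 <;> cases (C k).2 <;> decide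
  · -- a false literal
    refine ⟨⟨3, by omega⟩, ?_⟩
    have := hyval ⟨3, by omega⟩ (by norm_num)
    rw [this, show (⟨(3:ℕ) - 3, by omega⟩ : Fin 3) = 0 from rfl]
    rfl

end NAEaux

open NAEaux

/-- Reduction from E3-SAT to NAE6-SAT (Lemma: esat-nae6sat). -/
theorem stmt_0 (n m d : ℕ) (hn : 1 ≤ n) (hm : 1 ≤ m) (hd : 1 ≤ d)
    (ε : ℝ) (hε0 : 0 < ε) (hε1 : ε < 1)
    (ψ : Fin m → Fin 3 → Fin n × Bool)
    (hocc : ∀ i : Fin n, occCount ψ i ≤ d) :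
    ∃ φ : Fin (4 * m) → Fin 6 → Fin (2 * n) × Bool,
      (∀ i : Fin (2 * n), occCount φ i ≤ 4 * d) ∧
      ((∃ σ : Fin n → Bool, ∀ a, SatC σ (ψ a)) →
        ∃ τ : Fin (2 * n) → Bool, ∀ a, NAESatC τ (φ a)) ∧
      ((∀ σ : Fin n → Bool, (satCount σ ψ : ℝ) ≤ (1 - ε) * m) →
        ∀ τ : Fin (2 * n) → Bool, (naeCount τ φ : ℝ) ≤ (1 - ε / 4) * (4 * m)) := by
  classical
  set gIdx : Fin (4 * m) → Fin m := fun a => ⟨a.1 / 4, by have := a.2; omega⟩ with hgIdx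
  set φ : Fin (4 * m) → Fin 6 → Fin (2 * n) × Bool :=
    fun a => gadget (ψ (gIdx a)) ⟨a.1 % 4, by omega⟩ with hφ
  refine ⟨φ, ?_, ?_, ?_⟩
  · -- occurrence bound
    intro i
    set j : Fin n := if h : i.1 < n then ⟨i.1, h⟩ else ⟨i.1 - n, by have := i.2; omega⟩ with hj
    have key : ∀ a : Fin (4 * m), (∃ r, (φ a r).1 = i) → ∃ r, (ψ (gIdx a) r).1 = j := by
      intro a ⟨r, hr⟩
      rw [hφ] at hr
      simp only [gadget] at hr
      by_cases h3 : r.1 < 3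
      · rw [dif_pos h3] at hr
        refine ⟨⟨r.1, h3⟩, ?_⟩
        have h1 : ((ψ (gIdx a) ⟨r.1, h3⟩).1 : Fin n).1 = i.1 := congrArg Fin.val hr
        have h2 : ((ψ (gIdx a) ⟨r.1, h3⟩).1 : Fin n).1 < n := (ψ (gIdx a) ⟨r.1, h3⟩).1.2
        rw [hj, dif_pos (by omega)]
        ext
        simp only [Fin.val_mk]
        omega
      · rw [dif_neg h3] at hr
        refine ⟨⟨r.1 - 3, by have := r.2; omega⟩, ?_⟩
        have h1 : n + ((ψ (gIdx a) ⟨r.1 - 3, by have := r.2; omega⟩).1 : Fin n).1 = i.1 :=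
          congrArg Fin.val hr
        have h2 : ((ψ (gIdx a) ⟨r.1 - 3, by have := r.2; omega⟩).1 : Fin n).1 < n :=
          (ψ (gIdx a) ⟨r.1 - 3, by have := r.2; omega⟩).1.2
        rw [hj, dif_neg (by omega)]
        ext
        simp only [Fin.val_mk]
        omega
    calc occCount φ i
        ≤ 4 * occCount ψ j := by
          unfold occCount
          apply Finset.card_le_mul_card_image_of_maps_to
            (f := gIdx) (t := Finset.univ.filter (fun b => ∃ r, (ψ b r).1 = j))
          · intro a ha
            simp only [Finset.mem_filter, Finset.mem_univ, true_and] at ha ⊢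
            exact key a ha
          · intro b _
            have hle : (Finset.filter (fun a => gIdx a = b)
                (Finset.filter (fun a => ∃ r, (φ a r).1 = i) Finset.univ)).card
                ≤ (Finset.univ : Finset (Fin 4)).card := by
              apply Finset.card_le_card_of_injOn (fun a => (⟨a.1 % 4, by omega⟩ : Fin 4))
                (fun _ _ => Finset.mem_univ _)
              intro a1 h1 a2 h2 he
              simp only [Finset.mem_coe, Finset.mem_filter] at h1 h2
              have e1 : a1.1 / 4 = b.1 := congrArg Fin.val h1.2
              have e2 : a2.1 / 4 = b.1 := congrArg Fin.val h2.2
              have e3 : a1.1 % 4 = a2.1 % 4 := congrArg Fin.val he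
              ext
              omega
            simpa using hle
      _ ≤ 4 * d := by
          have := hocc j
          omega
  · -- completeness
    rintro ⟨σ, hσ⟩
    refine ⟨fun z => if h : z.1 < n then σ ⟨z.1, h⟩ else false, fun a => ?_⟩
    exact gadget_complete (ψ (gIdx a)) σ (hσ (gIdx a)) _
  · -- soundness
    intro hub τ
    set σ' : Fin n → Bool := fun i => xor (τ (xvar i)) (τ (yvar i)) with hσ'
    set U : Finset (Fin m) := Finset.univ.filter (fun b => ¬ SatC σ' (ψ b)) with hU
    set B : Finset (Fin (4 * m)) := Finset.univ.filter (fun a => ¬ NAESatC τ (φ a)) with hB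
    have hUB : U.card ≤ B.card := by
      have hf : ∀ b : Fin m, ¬ SatC σ' (ψ b) → ∃ c : Fin 4, ¬ NAESatC τ (gadget (ψ b) c) :=
        fun b hb => gadget_sound (ψ b) τ hb
      set f : Fin m → Fin (4 * m) := fun b =>
        if h : ¬ SatC σ' (ψ b) then
          ⟨4 * b.1 + (Classical.choose (hf b h)).1, by
            have := b.2
            have := (Classical.choose (hf b h)).2
            omega⟩
        else ⟨0, by omega⟩ with hfdef
      apply Finset.card_le_card_of_injOn f
      · intro b hb
        simp only [Finset.mem_coe, hU, Finset.mem_filter, Finset.mem_univ, true_and] at hb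
        simp only [Finset.mem_coe, hB, Finset.mem_filter, Finset.mem_univ, true_and]
        rw [hfdef]
        simp only [dif_pos hb]
        have hc := Classical.choose_spec (hf b hb)
        have hgi : gIdx ⟨4 * b.1 + (Classical.choose (hf b hb)).1, by
            have := b.2; have := (Classical.choose (hf b hb)).2; omega⟩ = b := by
          rw [hgIdx]
          ext
          have := (Classical.choose (hf b hb)).2
          simp only
          omega
        rw [hφ]
        simp only [hgi]
        have hpt : (⟨(4 * b.1 + (Classical.choose (hf b hb)).1) % 4, by omega⟩ : Fin 4)
            = Classical.choose (hf b hb) := by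
          ext
          have := (Classical.choose (hf b hb)).2
          simp only
          omega
        rw [hpt]
        exact hc
      · intro b1 h1 b2 h2 he
        simp only [Finset.mem_coe, hU, Finset.mem_filter, Finset.mem_univ, true_and] at h1 h2
        rw [hfdef] at he
        simp only [dif_pos h1, dif_pos h2] at he
        have e := congrArg Fin.val he
        simp only at e
        have c1 := (Classical.choose (hf b1 h1)).2
        have c2 := (Classical.choose (hf b2 h2)).2
        ext
        omega
    have hBcard : naeCount τ φ + B.card = 4 * m := by
      have := Finset.card_filter_add_card_filter_not
        (s := (Finset.univ : Finset (Fin (4 * m)))) (p := fun a => NAESatC τ (φ a))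
      simpa [naeCount, hB] using this
    have hUcard : satCount σ' ψ + U.card = m := by
      have := Finset.card_filter_add_card_filter_not
        (s := (Finset.univ : Finset (Fin m))) (p := fun b => SatC σ' (ψ b))
      simpa [satCount, hU] using this
    have hnat : naeCount τ φ ≤ 3 * m + satCount σ' ψ := by omega
    have hsat : (satCount σ' ψ : ℝ) ≤ (1 - ε) * m := hub σ'
    have h1 : (naeCount τ φ : ℝ) ≤ 3 * m + satCount σ' ψ := by exact_mod_cast hnat
    have hm' : (1 : ℝ) ≤ m := by exact_mod_cast hm
    nlinarith [h1, hsat, hm']
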